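/- arXiv:2505.01554 — 3 statements merged into one kernel-verified Lean document; each statement's English description precedes it below -/
import Mathlib

section
/- Settle is idempotent: applying Settle twice to a specification Ψ consistent with a description D gives the same result as applying it once, i.e., Settle(Settle(Ψ,D), D) = Settle(Ψ,D). -/
/-- Lengths of the maximal blocks of consecutive `true`s (1s), left to right. -/
def blocks (s : List Bool) : List ℕ :=
  ((s.splitOn false).map List.length).filter (· ≠ 0)

/-- A fix (a 0/1 string) is consistent with a description `D` if its maximal
blocks of 1s have exactly the lengths listed in `D`, from left to right. -/
def FixConsistent (s : List Bool) (D : List ℕ) : Prop := blocks s = D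

/-- `Refines Ψ' Ψ`: the specification `Ψ'` refines `Ψ` (at every position,
`Ψ` has `?` (= `none`) or the two symbols agree). -/
def Refines (Ψ' Ψ : List (Option Bool)) : Prop :=
  List.Forall₂ (fun a b => a = none ∨ a = b) Ψ Ψ'

/-- The fix `f` refines the specification `Ψ`. -/
def FixRefines (Ψ : List (Option Bool)) (f : List Bool) : Prop :=
  List.Forall₂ (fun a b => a = none ∨ a = some b) Ψ f

/-- A specification is consistent with `D` if some fix refining it is. -/
def SpecConsistent (Ψ : List (Option Bool)) (D : List ℕ) : Prop :=
  ∃ f : List Bool, FixRefines Ψ f ∧ FixConsistent f D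

open Classical in
/-- `settle Ψ D` replaces each `?` at position `i` of `Ψ` by the value `v`
whenever every fix refining `Ψ` and consistent with `D` has value `v` at
position `i`; all other positions are left unchanged. -/
noncomputable def settle (Ψ : List (Option Bool)) (D : List ℕ) : List (Option Bool) :=
  Ψ.mapIdx (fun i a =>
    match a with
    | some v => some v
    | none =>
      if h : ∃ v : Bool, ∀ f : List Bool,
          FixRefines Ψ f → FixConsistent f D → f[i]? = some v
      then some h.choose else none)

lemma settle_length (Ψ : List (Option Bool)) (D : List ℕ) :
    (settle Ψ D).length = Ψ.length := by
  simp [settle]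

open Classical in
lemma settle_getElem (Ψ : List (Option Bool)) (D : List ℕ) (i : ℕ)
    (h : i < (settle Ψ D).length) :
    (settle Ψ D)[i] = (match Ψ[i]'(by simpa [settle_length] using h) with
      | some v => some v
      | none =>
        if h : ∃ v : Bool, ∀ f : List Bool,
            FixRefines Ψ f → FixConsistent f D → f[i]? = some v
        then some h.choose else none) := by
  simp [settle, List.getElem_mapIdx]

lemma fixrefines_settle {Ψ : List (Option Bool)} {D : List ℕ} {f : List Bool}
    (hf : FixRefines Ψ f) (hc : FixConsistent f D) : FixRefines (settle Ψ D) f := by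
  rw [FixRefines, List.forall₂_iff_get] at hf ⊢
  obtain ⟨hl, hg⟩ := hf
  refine ⟨by simp [settle_length, hl], ?_⟩
  intro i h1 h2
  have h1' : i < Ψ.length := by simpa [settle_length] using h1
  simp only [List.get_eq_getElem, settle_getElem]
  have hgi := hg i h1' h2
  simp only [List.get_eq_getElem] at hgi
  cases hΨ : Ψ[i]'h1' with
  | some v =>
    simp only [hΨ]
    rcases hgi with h' | h' <;> simp [hΨ] at h' <;> simp [h']
  | none =>
    simp only [hΨ]
    split
    · rename_i hex
      right
      have := hex.choose_spec f (by rw [FixRefines, List.forall₂_iff_get]; exact ⟨hl, hg⟩) hc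
      have hfi : f[i]? = some (f[i]'h2) := by
        simp [List.getElem?_eq_getElem h2]
      rw [hfi] at this
      simp_all
    · left; rfl

lemma fixrefines_of_settle {Ψ : List (Option Bool)} {D : List ℕ} {f : List Bool}
    (hf : FixRefines (settle Ψ D) f) : FixRefines Ψ f := by
  rw [FixRefines, List.forall₂_iff_get] at hf ⊢
  obtain ⟨hl, hg⟩ := hf
  rw [settle_length] at hl
  refine ⟨hl, ?_⟩
  intro i h1 h2
  have h1' : i < (settle Ψ D).length := by simpa [settle_length] using h1
  have hgi := hg i h1' h2
  simp only [List.get_eq_getElem, settle_getElem] at hgi ⊢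
  cases hΨ : Ψ[i]'h1 with
  | none => left; rfl
  | some v =>
    simp only [hΨ] at hgi
    rcases hgi with h' | h' <;> simp_all

lemma cond_iff (Ψ : List (Option Bool)) (D : List ℕ) (i : ℕ) (v : Bool) :
    (∀ f : List Bool, FixRefines (settle Ψ D) f → FixConsistent f D → f[i]? = some v)
    ↔ (∀ f : List Bool, FixRefines Ψ f → FixConsistent f D → f[i]? = some v) := by
  constructor
  · intro H f hf hc; exact H f (fixrefines_settle hf hc) hc
  · intro H f hf hc; exact H f (fixrefines_of_settle hf) hc

theorem settle_idem' (Ψ : List (Option Bool)) (D : List ℕ) :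
    settle (settle Ψ D) D = settle Ψ D := by
  apply List.ext_getElem (by simp [settle_length])
  intro i h1 h2
  rw [settle_getElem]
  cases hS : (settle Ψ D)[i]'h2 with
  | some v => simp [hS]
  | none =>
    simp only [hS]
    rw [dif_neg]
    · intro ⟨v, hv⟩
      rw [settle_getElem] at hS
      revert hS
      have h1' : i < Ψ.length := by simpa [settle_length] using h2
      cases hΨ : Ψ[i]'h1' with
      | some w => simp [hΨ]
      | none =>
        simp only [hΨ]
        split
        · simp
        · rename_i hne
          intro _
          exact hne ⟨v, (cond_iff Ψ D i v).mp hv⟩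

/-- Idempotence of `Settle` on specifications consistent with `D`. -/
theorem settle_idem (Ψ : List (Option Bool)) (D : List ℕ)
    (h : SpecConsistent Ψ D) :
    settle (settle Ψ D) D = settle Ψ D := settle_idem' Ψ D
end

section
/- Correctness of the consistency recursion (concatenation lemma): a string s of length l over {0,1} matches the pattern a_1...a_k (where each 0 in the pattern may match one or more 0s and each 1 matches exactly one 1) if and only if there exist a split l = l_1 + l_2 with l_1, l_2 ≥ 1 and either (i) a split k = k_1 + k_2 such that the prefix of s of length l_1 matches a_1...a_{k_1} and the suffix of length l_2 matches a_{k_1+1}...a_k, or (ii) an index i with a_i = 0 such that the prefix matches a_1...a_i and the suffix matches a_i...a_k (sharing the 0 at position i), provided l ≥ 2. -/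
/-- `Matches s p`: the string `s` matches the pattern `p`, where each `false`
(0) of the pattern may be replaced by one or more `false`s and each `true`
(1) matches exactly one `true`. -/
inductive Matches : List Bool → List Bool → Prop
  | nil : Matches [] []
  | one {s p} : Matches s p → Matches (true :: s) (true :: p)
  | zero {s p} : Matches s p → Matches (false :: s) (false :: p)
  | pad {s p} : Matches s (false :: p) → Matches (false :: s) (false :: p)

lemma Matches.append {s₁ p₁ s₂ p₂ : List Bool} (h₁ : Matches s₁ p₁)
    (h₂ : Matches s₂ p₂) : Matches (s₁ ++ s₂) (p₁ ++ p₂) := by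
  induction h₁ with
  | nil => simpa
  | one _ ih => exact Matches.one ih
  | zero _ ih => exact Matches.zero ih
  | pad _ ih => exact Matches.pad ih

lemma Matches.nil_right {s : List Bool} (h : Matches s []) : s = [] := by
  cases h; rfl

lemma Matches.shared_aux {s p : List Bool} (h : Matches s p) :
    ∀ a₁ a₂ s₂, p = a₁ ++ [false] → Matches s₂ (false :: a₂) →
      Matches (s ++ s₂) (a₁ ++ false :: a₂) := by
  induction h with
  | nil => intro a₁ a₂ s₂ hp; exact absurd hp (by simp)
  | one h ih =>
      intro a₁ a₂ s₂ hp h₂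
      cases a₁ with
      | nil => simp at hp
      | cons b t =>
          simp at hp
          obtain ⟨hb, hp⟩ := hp
          subst hb
          exact Matches.one (ih t a₂ s₂ hp h₂)
  | zero h ih =>
      intro a₁ a₂ s₂ hp h₂
      cases a₁ with
      | nil =>
          simp at hp
          subst hp
          rw [h.nil_right]
          exact Matches.pad h₂
      | cons b t =>
          simp at hp
          obtain ⟨hb, hp⟩ := hp
          subst hb
          exact Matches.zero (ih t a₂ s₂ hp h₂)
  | pad h ih =>
      intro a₁ a₂ s₂ hp h₂
      cases a₁ with
      | nil =>
          simp at hp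
          subst hp
          exact Matches.pad (ih [] a₂ s₂ rfl h₂)
      | cons b t =>
          simp at hp
          obtain ⟨hb, hp⟩ := hp
          subst hb
          exact Matches.pad (ih (false :: t) a₂ s₂ (by simp [hp]) h₂)

/-- Concatenation lemma for the consistency recursion: for `|s| ≥ 2`, `s`
matches the pattern `a` iff `s` splits into two nonempty parts such that
either (i) the pattern splits accordingly, or (ii) the two parts share a
single `0` of the pattern. -/
theorem matches_split (s a : List Bool) (hl : 2 ≤ s.length) :
    Matches s a ↔
      ∃ s₁ s₂ : List Bool, s = s₁ ++ s₂ ∧ s₁ ≠ [] ∧ s₂ ≠ [] ∧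
        ((∃ a₁ a₂ : List Bool, a = a₁ ++ a₂ ∧ Matches s₁ a₁ ∧ Matches s₂ a₂) ∨
         (∃ a₁ a₂ : List Bool, a = a₁ ++ false :: a₂ ∧
            Matches s₁ (a₁ ++ [false]) ∧ Matches s₂ (false :: a₂))) := by
  constructor
  · intro h
    cases h with
    | nil => simp at hl
    | @one s' p h' =>
        refine ⟨[true], s', rfl, by simp, ?_, Or.inl ⟨[true], p, rfl,
          Matches.one Matches.nil, h'⟩⟩
        rintro rfl; simp at hl
    | @zero s' p h' =>
        refine ⟨[false], s', rfl, by simp, ?_, Or.inl ⟨[false], p, rfl,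
          Matches.zero Matches.nil, h'⟩⟩
        rintro rfl; simp at hl
    | @pad s' p h' =>
        refine ⟨[false], s', rfl, by simp, ?_, Or.inr ⟨[], p, rfl,
          Matches.zero Matches.nil, h'⟩⟩
        rintro rfl; simp at hl
  · rintro ⟨s₁, s₂, rfl, -, -, ⟨a₁, a₂, rfl, h₁, h₂⟩ | ⟨a₁, a₂, rfl, h₁, h₂⟩⟩
    · exact h₁.append h₂
    · exact h₁.shared_aux a₁ a₂ s₂ rfl h₂
end

section
/- Uniqueness of blocker matching: let Ψ be a specification in which the filled (1) positions form m disjoint runs each of length exactly b, separated by gaps of ?-positions each of length strictly less than b, and let D be a description whose clues of size ≥ b are exactly m clues of size exactly b. Then in every fix refining Ψ consistent with D, the i-th size-b clue of D is realized exactly on the i-th run of pre-filled 1s. -/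
/-- Auxiliary function computing maximal runs of `true` with their start
positions, beginning at position `i`. -/
def runsAux : ℕ → List Bool → List (ℕ × ℕ)
  | _, [] => []
  | i, false :: s => runsAux (i+1) s
  | i, true :: s =>
    match runsAux (i+1) s with
    | (j, len) :: rest =>
        if j = i+1 then (i, len+1) :: rest else (i, 1) :: (j, len) :: rest
    | [] => [(i, 1)]

/-- The maximal runs of `true`s of a 0/1 string, as (start, length) pairs,
from left to right. -/
def runs (s : List Bool) : List (ℕ × ℕ) := runsAux 0 s

lemma runsAux_shift (s : List Bool) : ∀ i, runsAux (i+1) s = (runsAux i s).map (fun p => (p.1+1, p.2)) := by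
  induction s with
  | nil => intro i; simp [runsAux]
  | cons c s ih =>
    intro i
    cases c with
    | false => simp [runsAux, ih]
    | true =>
      simp only [runsAux, ih (i+1)]
      cases h : runsAux (i+1) s with
      | nil => simp
      | cons p rest =>
        obtain ⟨j, len⟩ := p
        by_cases hj : j = i+1 <;> simp [hj]

lemma runs_cons_false (s : List Bool) :
    runs (false :: s) = (runs s).map (fun p => (p.1+1, p.2)) := by
  simp [runs, runsAux, runsAux_shift]

lemma runs_cons_true (s : List Bool) :
    runs (true :: s) = match runs s with
      | [] => [(0,1)]
      | (j, len) :: rest =>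
        if j = 0 then (0, len+1) :: rest.map (fun p => (p.1+1, p.2))
        else (0,1) :: (j+1, len) :: rest.map (fun p => (p.1+1, p.2)) := by
  show runsAux 0 (true :: s) = _
  rw [show runsAux 0 (true :: s) = (match runsAux 1 s with
    | (j, len) :: rest => if j = 1 then (0, len+1) :: rest else (0,1) :: (j,len) :: rest
    | [] => [(0,1)]) from rfl]
  rw [show (1:ℕ) = 0 + 1 from rfl, runsAux_shift]
  show _ = (match runs s with | [] => _ | (j, len) :: rest => _)
  cases h : runs s with
  | nil => rw [show runsAux 0 s = [] from h]; simp
  | cons p rest =>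
    obtain ⟨j, len⟩ := p
    rw [show runsAux 0 s = (j,len) :: rest from h]
    by_cases hj : j = 0 <;> simp [hj]

lemma exists_run_of_true (s : List Bool) : ∀ j, s[j]? = some true →
    ∃ p ∈ runs s, p.1 ≤ j ∧ j < p.1 + p.2 := by
  induction s with
  | nil => intro j h; simp at h
  | cons c s ih =>
    intro j h
    cases j with
    | zero =>
      simp at h; subst h
      rw [runs_cons_true]
      cases hs : runs s with
      | nil => exact ⟨(0,1), by simp, by simp⟩
      | cons p rest =>
        obtain ⟨j0, len⟩ := p
        by_cases hj : j0 = 0 <;> simp [hj] <;> omega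
    | succ k =>
      simp only [List.getElem?_cons_succ] at h
      obtain ⟨p, hp, h1, h2⟩ := ih k h
      cases c with
      | false =>
        rw [runs_cons_false]
        exact ⟨(p.1+1, p.2), List.mem_map.2 ⟨p, hp, rfl⟩, by omega⟩
      | true =>
        rw [runs_cons_true]
        cases hs : runs s with
        | nil => rw [hs] at hp; simp at hp
        | cons q rest =>
          obtain ⟨j0, len⟩ := q
          rw [hs] at hp
          by_cases hj : j0 = 0 <;> simp only [hj, if_true, if_false, reduceIte]
          · rcases List.mem_cons.1 hp with he | hm
            · refine ⟨(0, len+1), by simp, ?_⟩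
              rw [he] at h1 h2; simp at h1 h2 ⊢; omega
            · exact ⟨(p.1+1, p.2), List.mem_cons_of_mem _ (List.mem_map.2 ⟨p, hm, rfl⟩), by omega⟩
          · rcases List.mem_cons.1 hp with he | hm
            · refine ⟨(j0+1, len), by simp, ?_⟩
              rw [he] at h1 h2; simp at h1 h2 ⊢; omega
            · exact ⟨(p.1+1, p.2), List.mem_cons_of_mem _ (List.mem_cons_of_mem _ (List.mem_map.2 ⟨p, hm, rfl⟩)), by omega⟩

lemma runs_sorted (s : List Bool) : (runs s).Pairwise (fun p q => p.1 < q.1) := by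
  induction s with
  | nil => simp [runs, runsAux]
  | cons c s ih =>
    cases c with
    | false =>
      rw [runs_cons_false]
      exact (List.pairwise_map).2 (ih.imp (by intro a b h; simpa using Nat.succ_lt_succ h))
    | true =>
      rw [runs_cons_true]
      cases hs : runs s with
      | nil => simp
      | cons q rest =>
        obtain ⟨j0, len⟩ := q
        rw [hs] at ih
        rw [List.pairwise_cons] at ih
        obtain ⟨hhead, hrest⟩ := ih
        have hrest' : (rest.map (fun p => (p.1+1, p.2))).Pairwise (fun p q => p.1 < q.1) :=
          (List.pairwise_map).2 (hrest.imp (by intro a b h; simpa using Nat.succ_lt_succ h))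
        by_cases hj : j0 = 0 <;> simp only [hj, reduceIte]
        · rw [List.pairwise_cons]
          refine ⟨?_, hrest'⟩
          intro p hp
          obtain ⟨q, hq, rfl⟩ := List.mem_map.1 hp
          simp
        · rw [List.pairwise_cons, List.pairwise_cons]
          refine ⟨?_, ?_, hrest'⟩
          · intro p hp
            rcases List.mem_cons.1 hp with rfl | hm
            · simp
            · obtain ⟨q, hq, rfl⟩ := List.mem_map.1 hm; simp
          · intro p hp
            obtain ⟨q, hq, rfl⟩ := List.mem_map.1 hp
            have := hhead q hq
            simpa using Nat.succ_lt_succ this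

def IsRun (s : List Bool) (j l : ℕ) : Prop :=
  0 < l ∧ (∀ k, k < l → s[j+k]? = some true) ∧
  (j = 0 ∨ s[j-1]? = some false) ∧ s[j+l]? ≠ some true

lemma isRun_cons (c : Bool) (s : List Bool) (j l : ℕ) (hc : j = 0 → c = false) :
    IsRun (c :: s) (j+1) l ↔ IsRun s j l := by
  unfold IsRun
  have hget : ∀ k, (c :: s)[j+1+k]? = s[j+k]? := by
    intro k; rw [show j+1+k = (j+k)+1 by omega]; simp
  have hend : (c :: s)[j+1+l]? = s[j+l]? := hget l
  have hflank : ((j+1 = 0 ∨ (c :: s)[j+1-1]? = some false) ↔ (j = 0 ∨ s[j-1]? = some false)) := by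
    cases j with
    | zero => simp [hc rfl]
    | succ k => simp
  constructor
  · rintro ⟨h0, h1, h2, h3⟩
    exact ⟨h0, fun k hk => by rw [← hget]; exact h1 k hk, hflank.1 h2, by rw [← hend]; exact h3⟩
  · rintro ⟨h0, h1, h2, h3⟩
    exact ⟨h0, fun k hk => by rw [hget]; exact h1 k hk, hflank.2 h2, by rw [hend]; exact h3⟩

lemma no_true_of_runs_nil {s : List Bool} (hs : runs s = []) (j : ℕ) :
    s[j]? ≠ some true := by
  intro h
  obtain ⟨p, hp, _⟩ := exists_run_of_true s j h
  rw [hs] at hp; exact absurd hp (List.not_mem_nil)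

lemma isRun_of_mem_runs (s : List Bool) : ∀ j l, (j, l) ∈ runs s → IsRun s j l := by
  induction s with
  | nil => intro j l h; simp [runs, runsAux] at h
  | cons c s ih =>
    intro j l h
    cases c with
    | false =>
      rw [runs_cons_false] at h
      obtain ⟨⟨a, b⟩, hp, he⟩ := List.mem_map.1 h
      obtain ⟨rfl, rfl⟩ : a + 1 = j ∧ b = l := (Prod.mk.injEq _ _ _ _).mp he
      exact (isRun_cons false s a b (fun _ => rfl)).2 (ih a b hp)
    | true =>
      rw [runs_cons_true] at h
      cases hs : runs s with
      | nil =>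
        rw [hs] at h
        simp at h
        obtain ⟨rfl, rfl⟩ := h
        refine ⟨Nat.one_pos, ?_, Or.inl rfl, ?_⟩
        · intro k hk; interval_cases k; rfl
        · show (true :: s)[1]? ≠ some true
          simpa using no_true_of_runs_nil hs 0
      | cons q rest =>
        obtain ⟨j0, len⟩ := q
        rw [hs] at h
        have hsorted := runs_sorted s
        rw [hs, List.pairwise_cons] at hsorted
        by_cases hj : j0 = 0
        · subst hj
          simp only [if_true, reduceIte] at h
          rcases List.mem_cons.1 h with he | hm
          · obtain ⟨rfl, rfl⟩ : (0 : ℕ) = j ∧ len + 1 = l := by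
              exact ⟨congrArg Prod.fst he.symm, congrArg Prod.snd he.symm⟩
            obtain ⟨h0, h1, _, h3⟩ := ih 0 len (hs ▸ List.mem_cons_self)
            refine ⟨Nat.succ_pos _, ?_, Or.inl rfl, ?_⟩
            · intro k hk
              cases k with
              | zero => rfl
              | succ k' =>
                rw [show 0+(k'+1) = (0+k')+1 by omega, List.getElem?_cons_succ]
                exact h1 k' (by omega)
            · rw [show 0+(len+1) = (0+len)+1 by omega, List.getElem?_cons_succ]
              exact h3
          · obtain ⟨⟨a, b⟩, hp, he⟩ := List.mem_map.1 hm
            obtain ⟨rfl, rfl⟩ : a + 1 = j ∧ b = l := (Prod.mk.injEq _ _ _ _).mp he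
            have ha : 0 < a := hsorted.1 _ hp
            exact (isRun_cons true s a b (fun h0 => absurd h0 (by omega))).2
              (ih a b (hs ▸ List.mem_cons_of_mem _ hp))
        · simp only [hj, reduceIte] at h
          rcases List.mem_cons.1 h with he | h'
          · obtain ⟨rfl, rfl⟩ : (0 : ℕ) = j ∧ (1 : ℕ) = l :=
              ⟨congrArg Prod.fst he.symm, congrArg Prod.snd he.symm⟩
            refine ⟨Nat.one_pos, ?_, Or.inl rfl, ?_⟩
            · intro k hk; interval_cases k; rfl
            · show (true :: s)[1]? ≠ some true
              simp only [List.getElem?_cons_succ]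
              intro htr
              obtain ⟨p, hp, hc1, hc2⟩ := exists_run_of_true s 0 htr
              have hp1 : p.1 = 0 := by omega
              rw [hs] at hp
              rcases List.mem_cons.1 hp with rfl | hm
              · exact hj hp1
              · have := hsorted.1 _ hm; omega
          · rcases List.mem_cons.1 h' with he | hm
            · obtain ⟨rfl, rfl⟩ : j0 + 1 = j ∧ len = l := (Prod.mk.injEq _ _ _ _).mp he.symm
              exact (isRun_cons true s j0 len (fun h0 => absurd h0 hj)).2
                (ih j0 len (hs ▸ List.mem_cons_self))
            · obtain ⟨⟨a, b⟩, hp, he⟩ := List.mem_map.1 hm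
              obtain ⟨rfl, rfl⟩ : a + 1 = j ∧ b = l := (Prod.mk.injEq _ _ _ _).mp he
              have ha : j0 < a := hsorted.1 _ hp
              exact (isRun_cons true s a b (fun h0 => absurd h0 (by omega))).2
                (ih a b (hs ▸ List.mem_cons_of_mem _ hp))

lemma isRun_unique {s : List Bool} {j1 l1 j2 l2 p : ℕ}
    (h1 : IsRun s j1 l1) (h2 : IsRun s j2 l2)
    (hp1 : j1 ≤ p) (hp2 : p < j1 + l1) (hq1 : j2 ≤ p) (hq2 : p < j2 + l2) :
    j1 = j2 ∧ l1 = l2 := by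
  obtain ⟨h10, h11, h12, h13⟩ := h1
  obtain ⟨h20, h21, h22, h23⟩ := h2
  have hjj : j1 = j2 := by
    by_contra hne
    rcases Nat.lt_or_ge j1 j2 with hlt | hge
    · -- j2-1 is inside run 1, but flank of run 2 says false there
      have hin : s[j2 - 1]? = some true := by
        have := h11 (j2 - 1 - j1) (by omega)
        rwa [show j1 + (j2 - 1 - j1) = j2 - 1 by omega] at this
      rcases h22 with h | h
      · omega
      · rw [h] at hin; simp at hin
    · have hlt : j2 < j1 := by omega
      have hin : s[j1 - 1]? = some true := by
        have := h21 (j1 - 1 - j2) (by omega)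
        rwa [show j2 + (j1 - 1 - j2) = j1 - 1 by omega] at this
      rcases h12 with h | h
      · omega
      · rw [h] at hin; simp at hin
  subst hjj
  refine ⟨rfl, ?_⟩
  by_contra hne
  rcases Nat.lt_or_ge l1 l2 with hlt | hge
  · exact h13 (h21 l1 hlt)
  · exact h23 (h11 l2 (by omega))

lemma mem_runs_of_isRun {s : List Bool} {j l : ℕ} (h : IsRun s j l) : (j, l) ∈ runs s := by
  have htr : s[j]? = some true := by
    have := h.2.1 0 h.1; rwa [Nat.add_zero] at this
  obtain ⟨p, hp, hc1, hc2⟩ := exists_run_of_true s j htr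
  have hr := isRun_of_mem_runs s p.1 p.2 (by rwa [Prod.mk.eta])
  obtain ⟨e1, e2⟩ := isRun_unique h hr (le_refl j) (by have := h.1; omega) hc1 hc2
  rw [e1, e2, Prod.mk.eta]; exact hp

lemma mem_runs_iff (s : List Bool) (j l : ℕ) : (j, l) ∈ runs s ↔ IsRun s j l :=
  ⟨isRun_of_mem_runs s j l, mem_runs_of_isRun⟩

lemma sorted_ext {l1 l2 : List (ℕ × ℕ)}
    (h1 : l1.Pairwise (fun p q => p.1 < q.1)) (h2 : l2.Pairwise (fun p q => p.1 < q.1))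
    (hmem : ∀ p, p ∈ l1 ↔ p ∈ l2) : l1 = l2 := by
  induction l1 generalizing l2 with
  | nil =>
    cases l2 with
    | nil => rfl
    | cons q t => exact absurd ((hmem q).2 (List.mem_cons_self)) (List.not_mem_nil)
  | cons p t ih =>
    cases l2 with
    | nil => exact absurd ((hmem p).1 (List.mem_cons_self)) (List.not_mem_nil)
    | cons q t2 =>
      rw [List.pairwise_cons] at h1 h2
      have hpq : p = q := by
        rcases List.mem_cons.1 ((hmem p).1 (List.mem_cons_self)) with h | h
        · exact h
        · rcases List.mem_cons.1 ((hmem q).2 (List.mem_cons_self)) with h' | h'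
          · exact h'.symm
          · have := h2.1 p h; have := h1.1 q h'; omega
      subst hpq
      congr 1
      refine ih h1.2 h2.2 (fun x => ⟨fun hx => ?_, fun hx => ?_⟩)
      · rcases List.mem_cons.1 ((hmem x).1 (List.mem_cons_of_mem _ hx)) with h | h
        · subst h; exact absurd (h1.1 x hx) (lt_irrefl _)
        · exact h
      · rcases List.mem_cons.1 ((hmem x).2 (List.mem_cons_of_mem _ hx)) with h | h
        · subst h; exact absurd (h2.1 x hx) (lt_irrefl _)
        · exact h

/-- Uniqueness of blocker matching: suppose the pre-filled (`1`) positions of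
the specification `Ψ` form `m` runs, each of length exactly `b`, each flanked
by `0`s (or the ends of the string), all other unsettled positions form gaps
of length `< b`, and the clues of `D` of size `≥ b` are exactly `m` clues of
size exactly `b`. Then in every fix refining `Ψ` and consistent with `D`, the
blocks of size `≥ b` (i.e. the realizations of the `m` size-`b` clues) are
exactly the `m` pre-filled runs, in order. -/
theorem blocker_matching_unique (Ψ : List (Option Bool)) (b m : ℕ)
    (hb : 0 < b) (D : List ℕ)
    (R : List (ℕ × ℕ)) (hR : R = runs (Ψ.map fun a => a = some true))
    (hm : R.length = m) (hlen : ∀ r ∈ R, r.2 = b)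
    (hflank : ∀ r ∈ R,
      (r.1 = 0 ∨ Ψ[r.1 - 1]? = some (some false)) ∧
      (r.1 + r.2 = Ψ.length ∨ Ψ[r.1 + r.2]? = some (some false)))
    (hgaps : ∀ i len : ℕ, i + len ≤ Ψ.length →
      (∀ j : ℕ, i ≤ j → j < i + len → Ψ[j]? = some none) → len < b)
    (hD : D.filter (fun d => b ≤ d) = List.replicate m b)
    (f : List Bool) (href : FixRefines Ψ f) (hcon : FixConsistent f D) :
    (runs f).filter (fun r => b ≤ r.2) = R := by

  classical
  set g : List Bool := Ψ.map (fun a => decide (a = some true)) with hg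
  have hRg : R = runs g := hR
  have hlen_f : Ψ.length = f.length := href.length_eq
  have hglen : g.length = Ψ.length := by simp [hg]
  -- transfer: a determined position of Ψ has that value in f
  have htrans : ∀ (p : ℕ) (x : Bool), Ψ[p]? = some (some x) → f[p]? = some x := by
    intro p x hp
    obtain ⟨hl, hpt⟩ := List.forall₂_iff_get.1 href
    obtain ⟨hplt, hget⟩ := List.getElem?_eq_some_iff.1 hp
    have := hpt p hplt (by omega)
    simp only [List.get_eq_getElem] at this
    rw [hget] at this
    rcases this with h | h
    · exact absurd h (by simp)
    · rw [List.getElem?_eq_getElem (by omega), ← Option.some_inj.1 h.symm]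
  -- transfer: if f is true, Ψ is none or true there
  have htrans2 : ∀ p : ℕ, f[p]? = some true →
      Ψ[p]? = some none ∨ Ψ[p]? = some (some true) := by
    intro p hp
    obtain ⟨hl, hpt⟩ := List.forall₂_iff_get.1 href
    obtain ⟨hplt, hget⟩ := List.getElem?_eq_some_iff.1 hp
    have := hpt p (by omega) hplt
    simp only [List.get_eq_getElem] at this
    rw [hget] at this
    rcases this with h | h
    · left; rw [List.getElem?_eq_getElem (by omega), h]
    · right; rw [List.getElem?_eq_getElem (by omega), h]
  have hgt : ∀ p : ℕ, g[p]? = some true ↔ Ψ[p]? = some (some true) := by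
    intro p
    rw [hg, List.getElem?_map]
    cases h : Ψ[p]? <;> simp
  -- each element of R is a run of f of length b
  have key : ∀ r ∈ R, IsRun f r.1 b := by
    intro r hr
    have hrb : r.2 = b := hlen r hr
    have hrg : IsRun g r.1 r.2 := (mem_runs_iff g r.1 r.2).1 (by rw [← hRg] at *; rwa [Prod.mk.eta])
    obtain ⟨h0, h1, h2, h3⟩ := hrg
    obtain ⟨hf1, hf2⟩ := hflank r hr
    refine ⟨hb, ?_, ?_, ?_⟩
    · intro k hk
      exact htrans _ true ((hgt _).1 (h1 k (by omega)))
    · rcases hf1 with h | h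
      · exact Or.inl h
      · exact Or.inr (htrans _ false h)
    · rw [← hrb]
      rcases hf2 with h | h
      · rw [List.getElem?_eq_none_iff.2 (by omega)]; simp
      · rw [htrans _ false h]; simp
  rw [hRg]
  apply sorted_ext ((runs_sorted f).filter _) (runs_sorted g)
  rintro ⟨j, l⟩
  rw [List.mem_filter, mem_runs_iff, mem_runs_iff]
  simp only [decide_eq_true_eq]
  constructor
  · rintro ⟨hrun, hbl⟩
    -- find a Ψ-true position inside the run
    have hjl : j + l ≤ Ψ.length := by
      have := hrun.2.1 (l-1) (by have := hrun.1; omega)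
      obtain ⟨hlt, _⟩ := List.getElem?_eq_some_iff.1 this
      omega
    have hex : ∃ k, k < l ∧ Ψ[j+k]? = some (some true) := by
      by_contra hno
      push_neg at hno
      have : l < b := by
        apply hgaps j l hjl
        intro jj hjj1 hjj2
        have hf : f[jj]? = some true := by
          have := hrun.2.1 (jj - j) (by omega)
          rwa [show j + (jj - j) = jj by omega] at this
        rcases htrans2 jj hf with h | h
        · exact h
        · exact absurd h (by rw [show jj = j + (jj - j) by omega]; exact hno _ (by omega))
      omega
    obtain ⟨k, hk, hψ⟩ := hex
    obtain ⟨p, hp, hc1, hc2⟩ := exists_run_of_true g (j+k) ((hgt _).2 hψ)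
    have hpR : p ∈ R := by rw [hRg]; exact hp
    have hpb : p.2 = b := hlen p hpR
    have hpf : IsRun f p.1 b := key p hpR
    obtain ⟨e1, e2⟩ := isRun_unique hrun hpf (le_refl j |>.trans (by omega)) (by omega)
      hc1 (by omega)
    rw [e1, e2, ← hpb]
    exact (mem_runs_iff g p.1 p.2).1 (by rwa [Prod.mk.eta])
  · intro hrun
    have hmem : (j, l) ∈ R := by rw [hRg]; exact (mem_runs_iff g j l).2 hrun
    have hlb : l = b := hlen (j, l) hmem
    have := key (j, l) hmem
    simp only at this
    rw [hlb]
    exact ⟨this, le_refl b⟩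
end
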